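/- For all u ∈ [0,1], all b > 0 and all positive reals a₁,…,a_q, the composition identity g_{a₁,…,a_q}(g_{b,…,b}(u)) = g_{b·a₁,…,b·a_q}(u) holds, where g_{b,…,b}(u) = u/(b + (1−b)u). -/

import Mathlib

noncomputable def g (q : ℕ) (a : ℕ → ℝ) (u : ℝ) : ℝ :=
  (q : ℝ) ^ q * u * (∏ i ∈ Finset.Icc 2 q, (a i + u - a i * u)) /
    ((∑ i ∈ Finset.Icc 1 q, a i) - ((∑ i ∈ Finset.Icc 1 q, a i) - q) * u) ^ q

theorem stmt_7 (q : ℕ) (hq : 1 ≤ q) (a : ℕ → ℝ)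
    (ha : ∀ i ∈ Finset.Icc 1 q, 0 < a i) (b : ℝ) (hb : 0 < b)
    (u : ℝ) (hu : u ∈ Set.Icc (0:ℝ) 1) :
    g q a (u / (b + (1 - b) * u)) = g q (fun i => b * a i) u := by
  obtain ⟨hu0, hu1⟩ := hu
  set D : ℝ := b + (1 - b) * u with hDdef
  have hD : 0 < D := by
    rcases eq_or_lt_of_le hu0 with h | h
    · simp [hDdef, ← h]; linarith
    · nlinarith
  have hDne : D ≠ 0 := hD.ne'
  unfold g
  set S : ℝ := ∑ i ∈ Finset.Icc 1 q, a i with hS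
  have hfac : ∀ i ∈ Finset.Icc 2 q,
      a i + u / D - a i * (u / D) = (b * a i + u - b * a i * u) / D := by
    intro i _
    field_simp
    ring
  rw [Finset.prod_congr rfl hfac, Finset.prod_div_distrib, Finset.prod_const,
    Nat.card_Icc]
  have hsum : ∑ i ∈ Finset.Icc 1 q, b * a i = b * S := by
    rw [hS, Finset.mul_sum]
  rw [hsum]
  have hden : S - (S - q) * (u / D) = (b * S - (b * S - q) * u) / D := by
    field_simp
    ring
  rw [hden, div_pow]
  have hq' : q + 1 - 2 + 1 = q := by omega
  have hpow : D ^ (q + 1 - 2) * D = D ^ q := by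
    rw [← pow_succ, hq']
  set N : ℝ := ∏ i ∈ Finset.Icc 2 q, (b * a i + u - b * a i * u) with hN
  have h1 : (q : ℝ) ^ q * (u / D) * (N / D ^ (q + 1 - 2))
      = ((q : ℝ) ^ q * u * N) / D ^ q := by
    rw [← hpow]
    field_simp
  rw [h1, div_div_div_eq, mul_comm (D ^ q), mul_div_mul_right _ _ (pow_ne_zero q hDne)]
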